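/- Let X be a topological space, Γ a group acting on X properly discontinuously and cocompactly, σ : X → X a continuous map, and s an automorphism of Γ satisfying the equivariance relation σ(δ • x) = s(δ) • σ(x) for all δ ∈ Γ and x ∈ X. Then only finitely many s-twisted conjugacy classes of Γ contain an element γ such that the map x ↦ γ • σ(x) has a fixed point in X; formally, there exists a finite subset F ⊆ Γ such that every γ ∈ Γ for which γ • σ(x) = x has a solution x ∈ X is of the form γ = δ·γ₀·s(δ)⁻¹ for some δ ∈ Γ and γ₀ ∈ F. -/
import Mathlib


open scoped Pointwise

/-- For a properly discontinuous cocompact action of `Γ` on `X`, a continuous map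
`σ : X → X`, and an automorphism `s` of `Γ` with `σ(δ • x) = s(δ) • σ(x)`, only
finitely many `s`-twisted conjugacy classes of `Γ` contain an element `γ` such that
`x ↦ γ • σ(x)` has a fixed point. -/
theorem finitely_many_elliptic_twisted_classes
    {X : Type*} [TopologicalSpace X] {Γ : Type*} [Group Γ] [MulAction Γ X]
    (σ : X → X) (hσ : Continuous σ) (s : Γ ≃* Γ)
    (hequiv : ∀ (δ : Γ) (x : X), σ (δ • x) = s δ • σ x)
    (hpd : ∀ K L : Set X, IsCompact K → IsCompact L →
      {γ : Γ | ((γ • K) ∩ L).Nonempty}.Finite)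
    (hcc : ∃ K : Set X, IsCompact K ∧ ∀ x : X, ∃ γ : Γ, x ∈ γ • K) :
    ∃ F : Finset Γ, ∀ γ : Γ, (∃ x : X, γ • σ x = x) →
      ∃ δ : Γ, ∃ γ₀ ∈ F, γ = δ * γ₀ * (s δ)⁻¹ := by
  obtain ⟨K, hK, hKcov⟩ := hcc
  have hfin := hpd (σ '' K) K (hK.image hσ) hK
  refine ⟨hfin.toFinset, ?_⟩
  rintro γ ⟨x, hx⟩
  obtain ⟨δ, k, hk, hδk⟩ := hKcov x
  refine ⟨δ, δ⁻¹ * γ * s δ, ?_, by group⟩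
  have hx' : (δ⁻¹ * γ * s δ) • σ k = k := by
    have hδk' : δ • k = x := hδk
    have : γ • σ (δ • k) = δ • k := by rw [hδk']; exact hx
    rw [hequiv] at this
    have := congrArg (δ⁻¹ • ·) this
    simpa [mul_smul] using this
  simp only [Set.Finite.mem_toFinset, Set.mem_setOf_eq]
  exact ⟨k, ⟨σ k, ⟨k, hk, rfl⟩, hx'⟩, hk⟩
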